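/- Let w ∈ S_n be a minimal crowded permutation. Then every crowded subset of Row₂(P(w)) contains the largest element of Row₂(P(w)). -/

import Mathlib

/-- The value in position `j` (0-indexed) of the one-line notation of `w`,
extended by the identity outside the range `[0, n)`. -/
def entry {n : ℕ} (w : Equiv.Perm (Fin n)) (j : ℕ) : ℕ :=
  if h : j < n then (w ⟨j, h⟩ : ℕ) else j

/-- One-line notation of a permutation, as a list of natural numbers (0-indexed values). -/
def oneLine {n : ℕ} (w : Equiv.Perm (Fin n)) : List ℕ :=
  List.ofFn (fun i => (w i : ℕ))

/-- A permutation is fully commutative iff it avoids the pattern 321. -/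
def FullyCommutative {n : ℕ} (w : Equiv.Perm (Fin n)) : Prop :=
  ¬ ∃ i j k : Fin n, i < j ∧ j < k ∧ w k < w j ∧ w j < w i

/-- A permutation is boolean iff it avoids the patterns 321 and 3412. -/
def BooleanPerm {n : ℕ} (w : Equiv.Perm (Fin n)) : Prop :=
  FullyCommutative w ∧
    ¬ ∃ i j k l : Fin n, i < j ∧ j < k ∧ k < l ∧
        w k < w l ∧ w l < w i ∧ w i < w j

/-- The Coxeter length of a permutation: its number of inversions. -/
def invCount {n : ℕ} (w : Equiv.Perm (Fin n)) : ℕ :=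
  (Finset.univ.filter fun p : Fin n × Fin n => p.1 < p.2 ∧ w p.2 < w p.1).card

/-- The support of `w`: the set of (0-indexed) indices `i` such that the simple
transposition `s_i` appears in some (equivalently, every) reduced word of `w`;
equivalently, `{w(0),…,w(i)} ≠ {0,…,i}`, i.e. `max {w(j) : j ≤ i} > i`. -/
def Supp {n : ℕ} (w : Equiv.Perm (Fin n)) : Set ℕ :=
  {i | ∃ j : Fin n, (j : ℕ) ≤ i ∧ i < (w j : ℕ)}

/-- The simple transposition `s_i`, swapping positions `i` and `i+1` (0-indexed). -/
def simpleTr {n : ℕ} (i : ℕ) (h : i + 1 < n) : Equiv.Perm (Fin n) :=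
  Equiv.swap ⟨i, by omega⟩ ⟨i + 1, h⟩

/-- Schensted row insertion of a value into a tableau (a list of rows). -/
def rowInsert : List (List ℕ) → ℕ → List (List ℕ)
  | [], x => [[x]]
  | r :: rest, x =>
    match r.find? (fun y => decide (x < y)) with
    | none => (r ++ [x]) :: rest
    | some y => (r.map fun z => if z = y then x else z) :: rowInsert rest y

/-- RSK insertion tableau of a list. -/
def RSKList (l : List ℕ) : List (List ℕ) := l.foldl rowInsert []

/-- RSK insertion tableau `P(w)` of a permutation. -/
def RSKP {n : ℕ} (w : Equiv.Perm (Fin n)) : List (List ℕ) := RSKList (oneLine w)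

/-- RSK recording tableau `Q(w) = P(w⁻¹)`. -/
def RSKQ {n : ℕ} (w : Equiv.Perm (Fin n)) : List (List ℕ) := RSKP w⁻¹

/-- The set of entries in the first row of a tableau. -/
def Row1 (T : List (List ℕ)) : Finset ℕ := (T.getD 0 []).toFinset

/-- The set of entries in the second row of a tableau. -/
def Row2 (T : List (List ℕ)) : Finset ℕ := (T.getD 1 []).toFinset

/-- `BumpsAt l k z` : during the RSK insertion of the list `l`, the insertion of
the `(k+1)`-st letter of `l` bumps the value `z` from the first row to the
second row (`z` is the smallest first-row entry larger than the inserted letter). -/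
def BumpsAt (l : List ℕ) (k : ℕ) (z : ℕ) : Prop :=
  k < l.length ∧
    ((RSKList (l.take k)).getD 0 []).find? (fun y => decide (l.getD k 0 < y)) = some z

/-- `Bumps l b z` : during the RSK insertion of `l`, the value `b` bumps the
value `z` from the first row to the second row. -/
def Bumps (l : List ℕ) (b z : ℕ) : Prop :=
  ∃ k, l.getD k 0 = b ∧ BumpsAt l k z

/-- A finite set of naturals is crowded if some integer interval `[y, y+2x]`
(with `x > 0`) contains more than `x+1` of its elements. -/
def CrowdedSet (L : Finset ℕ) : Prop :=
  ∃ x y : ℤ, 0 < x ∧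
    x + 1 < ((L.filter fun a : ℕ => y ≤ (a : ℤ) ∧ (a : ℤ) ≤ y + 2 * x).card : ℤ)

/-- A fully commutative permutation is crowded if the second row of its RSK
insertion tableau is a crowded set. -/
def CrowdedPerm {n : ℕ} (w : Equiv.Perm (Fin n)) : Prop :=
  CrowdedSet (Row2 (RSKP w))

/-- Covering relation of the right weak order. -/
def RWCovers {n : ℕ} (u v : Equiv.Perm (Fin n)) : Prop :=
  ∃ i, ∃ h : i + 1 < n, v = u * simpleTr i h ∧ invCount v = invCount u + 1

/-- The right weak order on `S_n`. -/
def RightWeakLE {n : ℕ} : Equiv.Perm (Fin n) → Equiv.Perm (Fin n) → Prop :=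
  Relation.ReflTransGen RWCovers

/-- Covering relation of the left weak order. -/
def LWCovers {n : ℕ} (u v : Equiv.Perm (Fin n)) : Prop :=
  ∃ i, ∃ h : i + 1 < n, v = simpleTr i h * u ∧ invCount v = invCount u + 1

/-- The left weak order on `S_n`. -/
def LeftWeakLE {n : ℕ} : Equiv.Perm (Fin n) → Equiv.Perm (Fin n) → Prop :=
  Relation.ReflTransGen LWCovers

/-- A minimal crowded permutation: a crowded fully commutative permutation all of
whose strict predecessors (among fully commutative permutations) in the right
weak order are uncrowded. -/
def MinimalCrowded {n : ℕ} (w : Equiv.Perm (Fin n)) : Prop :=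
  FullyCommutative w ∧ CrowdedPerm w ∧
    ∀ v : Equiv.Perm (Fin n), FullyCommutative v → RightWeakLE v w → v ≠ w →
      ¬ CrowdedPerm v

/-- `l` is an increasing subsequence of the one-line notation of `w`. -/
def IncreasingSubseq {n : ℕ} (w : Equiv.Perm (Fin n)) (l : List ℕ) : Prop :=
  l.Sublist (oneLine w) ∧ l.Pairwise (· < ·)

/-- The length of a longest increasing subsequence of `w`. -/
noncomputable def lisLen {n : ℕ} (w : Equiv.Perm (Fin n)) : ℕ :=
  sSup {k | ∃ l : List ℕ, IncreasingSubseq w l ∧ l.length = k}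

/-- A consecutive occurrence of the pattern 415263 starting at (0-indexed) position `i`. -/
def Consec415263 {n : ℕ} (w : Equiv.Perm (Fin n)) (i : ℕ) : Prop :=
  i + 5 < n ∧
    entry w (i + 1) < entry w (i + 3) ∧ entry w (i + 3) < entry w (i + 5) ∧
    entry w (i + 5) < entry w i ∧ entry w i < entry w (i + 2) ∧
    entry w (i + 2) < entry w (i + 4)

/-- A consecutive occurrence of the pattern 315264 starting at (0-indexed) position `i`. -/
def Consec315264 {n : ℕ} (w : Equiv.Perm (Fin n)) (i : ℕ) : Prop :=
  i + 5 < n ∧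
    entry w (i + 1) < entry w (i + 3) ∧ entry w (i + 3) < entry w i ∧
    entry w i < entry w (i + 5) ∧ entry w (i + 5) < entry w (i + 2) ∧
    entry w (i + 2) < entry w (i + 4)

/-- An occurrence (not necessarily consecutive) of the pattern 415263 in `w`,
at positions `p 0 < p 1 < ⋯ < p 5`. -/
def Occ415263 {n : ℕ} (w : Equiv.Perm (Fin n)) (p : Fin 6 → Fin n) : Prop :=
  StrictMono p ∧
    w (p 1) < w (p 3) ∧ w (p 3) < w (p 5) ∧ w (p 5) < w (p 0) ∧
    w (p 0) < w (p 2) ∧ w (p 2) < w (p 4)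

section SwapLemmas

variable {n : ℕ}

/-- Monotonicity of the swap off the swapped pair. -/
lemma swap_mono {p : ℕ} (hp : p + 1 < n) {i j : Fin n} (hij : i < j)
    (hne : ¬ ((i : ℕ) = p ∧ (j : ℕ) = p + 1)) :
    simpleTr p hp i < simpleTr p hp j := by
  set P : Fin n := ⟨p, by omega⟩
  set Q : Fin n := ⟨p + 1, hp⟩
  have hPQ : P ≠ Q := by simp [P, Q, Fin.ext_iff]
  have key : ∀ x : Fin n, ((Equiv.swap P Q) x : ℕ)
      = if (x : ℕ) = p then p + 1 else if (x : ℕ) = p + 1 then p else (x : ℕ) := by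
    intro x
    rcases eq_or_ne x P with rfl | hxP
    · simp [Equiv.swap_apply_left, P, Q]
    · rcases eq_or_ne x Q with rfl | hxQ
      · simp [Equiv.swap_apply_right, P, Q, Fin.ext_iff]
      · rw [Equiv.swap_apply_of_ne_of_ne hxP hxQ]
        have h1 : (x : ℕ) ≠ p := fun h => hxP (Fin.ext h)
        have h2 : (x : ℕ) ≠ p + 1 := fun h => hxQ (Fin.ext h)
        simp [h1, h2]
  have hi := key i
  have hj := key j
  have hij' : (i : ℕ) < (j : ℕ) := hij
  rw [Fin.lt_iff_val_lt_val]
  simp only [simpleTr]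
  rw [hi, hj]
  split_ifs <;> omega

lemma fc_swap {w : Equiv.Perm (Fin n)} {p : ℕ} (hp : p + 1 < n)
    (hdesc : w ⟨p + 1, hp⟩ < w ⟨p, by omega⟩) (hfc : FullyCommutative w) :
    FullyCommutative (w * simpleTr p hp) := by
  rintro ⟨i, j, k, hij, hjk, h1, h2⟩
  set σ := simpleTr p hp
  have happ : ∀ x, (w * σ) x = w (σ x) := fun x => rfl
  have hσP : σ (⟨p, by omega⟩ : Fin n) = (⟨p + 1, hp⟩ : Fin n) := Equiv.swap_apply_left _ _
  have hσQ : σ (⟨p + 1, hp⟩ : Fin n) = (⟨p, by omega⟩ : Fin n) := Equiv.swap_apply_right _ _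
  by_cases hijPQ : (i : ℕ) = p ∧ (j : ℕ) = p + 1
  · -- w (σ j) < w (σ i) becomes w P < w Q, contradicting descent
    have hiP : i = (⟨p, by omega⟩ : Fin n) := Fin.ext hijPQ.1
    have hjQ : j = (⟨p + 1, hp⟩ : Fin n) := Fin.ext hijPQ.2
    have e1 : σ i = (⟨p + 1, hp⟩ : Fin n) := (congrArg σ hiP).trans hσP
    have e2 : σ j = (⟨p, by omega⟩ : Fin n) := (congrArg σ hjQ).trans hσQ
    rw [happ, happ, e1, e2] at h2
    exact absurd h2 (not_lt.2 hdesc.le)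
  · by_cases hjkPQ : (j : ℕ) = p ∧ (k : ℕ) = p + 1
    · have hjP : j = (⟨p, by omega⟩ : Fin n) := Fin.ext hjkPQ.1
      have hkQ : k = (⟨p + 1, hp⟩ : Fin n) := Fin.ext hjkPQ.2
      have e1 : σ j = (⟨p + 1, hp⟩ : Fin n) := (congrArg σ hjP).trans hσP
      have e2 : σ k = (⟨p, by omega⟩ : Fin n) := (congrArg σ hkQ).trans hσQ
      rw [happ, happ, e1, e2] at h1
      exact absurd h1 (not_lt.2 hdesc.le)
    · have hik : ¬ ((i : ℕ) = p ∧ (k : ℕ) = p + 1) := by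
        rintro ⟨h1', h2'⟩
        have : (i : ℕ) < (j : ℕ) := hij
        have : (j : ℕ) < (k : ℕ) := hjk
        omega
      exact hfc ⟨σ i, σ j, σ k, swap_mono hp hij hijPQ, swap_mono hp hjk hjkPQ,
        h1, h2⟩

lemma invCount_swap {v : Equiv.Perm (Fin n)} {p : ℕ} (hp : p + 1 < n)
    (hasc : v ⟨p, by omega⟩ < v ⟨p + 1, hp⟩) :
    invCount (v * simpleTr p hp) = invCount v + 1 := by
  classical
  set σ := simpleTr p hp
  set P : Fin n := ⟨p, by omega⟩
  set Q : Fin n := ⟨p + 1, hp⟩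
  have hσσ : ∀ x, σ (σ x) = x := by
    intro x
    simp [σ, simpleTr, Equiv.swap_apply_self]
  have happ : ∀ x, (v * σ) x = v (σ x) := fun x => rfl
  set F : Finset (Fin n × Fin n) :=
    Finset.univ.filter fun q : Fin n × Fin n => q.1 < q.2 ∧ v q.2 < v q.1 with hF
  set F' : Finset (Fin n × Fin n) :=
    Finset.univ.filter fun q : Fin n × Fin n => q.1 < q.2 ∧ (v * σ) q.2 < (v * σ) q.1 with hF'
  set m : Fin n × Fin n → Fin n × Fin n := fun q => (σ q.1, σ q.2) with hm
  have hσP : σ P = Q := Equiv.swap_apply_left _ _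
  have hσQ : σ Q = P := Equiv.swap_apply_right _ _
  have hPQF : (P, Q) ∉ F := by
    intro h
    rw [hF, Finset.mem_filter] at h
    exact absurd h.2.2 (not_lt.2 hasc.le)
  have hPQne : ∀ q ∈ F, q ≠ (P, Q) := fun q hq he => hPQF (he ▸ hq)
  have hmF : ∀ q ∈ F, m q ∈ F' := by
    rintro ⟨i, j⟩ hq
    rw [hF, Finset.mem_filter] at hq
    obtain ⟨-, hij, hv⟩ := hq
    rw [hF', Finset.mem_filter]
    refine ⟨Finset.mem_univ _, ?_, ?_⟩
    · apply swap_mono hp hij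
      rintro ⟨h1, h2⟩
      exact hPQne (i, j) (by rw [hF, Finset.mem_filter]; exact ⟨Finset.mem_univ _, hij, hv⟩)
        (Prod.ext (Fin.ext h1) (Fin.ext h2))
    · rw [happ, happ, hσσ, hσσ]; exact hv
  have hmne : ∀ q ∈ F, m q ≠ (P, Q) := by
    rintro ⟨i, j⟩ hq heq
    have h1 : σ i = P := congrArg Prod.fst heq
    have h2 : σ j = Q := congrArg Prod.snd heq
    have hi : i = Q := by rw [← hσσ i, h1, hσP]
    have hj : j = P := by rw [← hσσ j, h2, hσQ]
    rw [hF, Finset.mem_filter] at hq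
    have hlt := hq.2.1
    rw [hi, hj] at hlt
    have : (p : ℕ) + 1 < p := hlt
    omega
  have hminj : Function.Injective m := by
    intro q q' h
    have h1 := congrArg Prod.fst h
    have h2 := congrArg Prod.snd h
    simp only [hm] at h1 h2
    exact Prod.ext (σ.injective h1) (σ.injective h2)
  have hPQF' : (P, Q) ∈ F' := by
    rw [hF', Finset.mem_filter]
    refine ⟨Finset.mem_univ _, ?_, ?_⟩
    · simp [P, Q, Fin.lt_iff_val_lt_val]
    · rw [happ, happ, hσP, hσQ]; exact hasc
  have hcard1 : F.card ≤ (F'.erase (P, Q)).card := by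
    apply Finset.card_le_card_of_injOn m
    · intro q hq
      exact Finset.mem_erase.2 ⟨hmne q hq, hmF q hq⟩
    · exact hminj.injOn
  have hcard2 : (F'.erase (P, Q)).card ≤ F.card := by
    apply Finset.card_le_card_of_injOn m
    · rintro ⟨i, j⟩ hq
      have hne := (Finset.mem_erase.1 hq).1
      have hq' := (Finset.mem_erase.1 hq).2
      rw [hF', Finset.mem_filter] at hq'
      obtain ⟨-, hij, hv⟩ := hq'
      rw [Finset.mem_coe, hF, Finset.mem_filter]
      refine ⟨Finset.mem_univ _, ?_, ?_⟩
      · apply swap_mono hp hij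
        rintro ⟨h1, h2⟩
        exact hne (Prod.ext (Fin.ext h1) (Fin.ext h2))
      · rw [happ, happ] at hv; exact hv
    · exact hminj.injOn
  have hcard3 : F'.card = (F'.erase (P, Q)).card + 1 :=
    (Finset.card_erase_add_one hPQF').symm
  have : F'.card = F.card + 1 := by omega
  simpa [invCount, hF, hF'] using this

end SwapLemmas

section OneLine

variable {n : ℕ}

lemma oneLine_length (w : Equiv.Perm (Fin n)) : (oneLine w).length = n := by
  simp [oneLine]

lemma oneLine_getElem (w : Equiv.Perm (Fin n)) (i : ℕ) (h : i < (oneLine w).length) :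
    (oneLine w)[i] = (w ⟨i, by simpa [oneLine] using h⟩ : ℕ) := by
  simp [oneLine]

lemma chain_lt (w : Equiv.Perm (Fin n)) (q : ℕ)
    (hadj : ∀ k (hk : k + 1 < n), q ≤ k → w ⟨k, by omega⟩ < w ⟨k + 1, hk⟩) :
    ∀ (i j : ℕ) (hi : i < n) (hj : j < n), q ≤ i → i < j → w ⟨i, hi⟩ < w ⟨j, hj⟩ := by
  have key : ∀ (d i : ℕ) (hi : i < n) (h : i + d + 1 < n), q ≤ i →
      w ⟨i, hi⟩ < w ⟨i + d + 1, h⟩ := by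
    intro d
    induction d with
    | zero => intro i hi h hq; exact hadj i h hq
    | succ d ih =>
      intro i hi h hq
      have h1 : i + d + 1 < n := by omega
      have := ih i hi h1 hq
      have h2 := hadj (i + d + 1) (by omega) (by omega)
      exact this.trans h2
  intro i j hi hj hqi hij
  have := key (j - i - 1) i hi (by omega) hqi
  have e : (⟨i + (j - i - 1) + 1, by omega⟩ : Fin n) = ⟨j, hj⟩ :=
    Fin.ext (show i + (j - i - 1) + 1 = j by omega)
  rw [e] at this
  exact this

lemma oneLine_decomp (u : Equiv.Perm (Fin n)) (p : ℕ) (hp : p + 1 < n) :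
    oneLine u = (oneLine u).take p ++ (u ⟨p, by omega⟩ : ℕ) ::
      (u ⟨p + 1, hp⟩ : ℕ) :: (oneLine u).drop (p + 2) := by
  have hlen : (oneLine u).length = n := oneLine_length u
  conv_lhs => rw [← List.take_append_drop p (oneLine u)]
  congr 1
  rw [List.drop_eq_getElem_cons (by omega : p < (oneLine u).length)]
  congr 1
  · exact oneLine_getElem u p (by omega)
  rw [List.drop_eq_getElem_cons (by omega : p + 1 < (oneLine u).length)]
  congr 1
  exact oneLine_getElem u (p + 1) (by omega)

lemma take_swap_eq (w : Equiv.Perm (Fin n)) (p : ℕ) (hp : p + 1 < n) :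
    (oneLine (w * simpleTr p hp)).take p = (oneLine w).take p := by
  apply List.ext_getElem
  · simp [oneLine_length]
  · intro i h1 h2
    have hi : i < p := by simp [oneLine_length] at h1; omega
    have hin : i < n := by omega
    rw [List.getElem_take, List.getElem_take, oneLine_getElem _ i (by simp [oneLine_length]; omega),
      oneLine_getElem _ i (by simp [oneLine_length]; omega)]
    have : (w * simpleTr p hp) ⟨i, hin⟩ = w ⟨i, hin⟩ := by
      have : simpleTr p hp ⟨i, hin⟩ = ⟨i, hin⟩ := by
        apply Equiv.swap_apply_of_ne_of_ne <;> · intro h; rw [Fin.ext_iff] at h; simp at h; omega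
      show w (simpleTr p hp ⟨i, hin⟩) = _
      rw [this]
    rw [this]

lemma drop_swap_eq (w : Equiv.Perm (Fin n)) (p : ℕ) (hp : p + 1 < n) :
    (oneLine (w * simpleTr p hp)).drop (p + 2) = (oneLine w).drop (p + 2) := by
  apply List.ext_getElem
  · simp [oneLine_length]
  · intro i h1 h2
    have hin : p + 2 + i < n := by simp [oneLine_length] at h1; omega
    rw [List.getElem_drop, List.getElem_drop,
      oneLine_getElem _ _ (by simp [oneLine_length]; omega),
      oneLine_getElem _ _ (by simp [oneLine_length]; omega)]
    have : (w * simpleTr p hp) ⟨p + 2 + i, hin⟩ = w ⟨p + 2 + i, hin⟩ := by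
      have : simpleTr p hp ⟨p + 2 + i, hin⟩ = ⟨p + 2 + i, hin⟩ := by
        apply Equiv.swap_apply_of_ne_of_ne <;> · intro h; rw [Fin.ext_iff] at h; simp at h; omega
      show w (simpleTr p hp ⟨p + 2 + i, hin⟩) = _
      rw [this]
    rw [this]

lemma swap_apply_p (w : Equiv.Perm (Fin n)) (p : ℕ) (hp : p + 1 < n) :
    (w * simpleTr p hp) ⟨p, by omega⟩ = w ⟨p + 1, hp⟩ := by
  show w (simpleTr p hp ⟨p, by omega⟩) = _
  rw [show simpleTr p hp ⟨p, by omega⟩ = ⟨p + 1, hp⟩ from Equiv.swap_apply_left _ _]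

lemma swap_apply_p1 (w : Equiv.Perm (Fin n)) (p : ℕ) (hp : p + 1 < n) :
    (w * simpleTr p hp) ⟨p + 1, hp⟩ = w ⟨p, by omega⟩ := by
  show w (simpleTr p hp ⟨p + 1, hp⟩) = _
  rw [show simpleTr p hp ⟨p + 1, hp⟩ = ⟨p, by omega⟩ from Equiv.swap_apply_right _ _]

end OneLine

lemma rowInsert_none {r : List ℕ} {rest : List (List ℕ)} {x : ℕ}
    (h : ∀ g ∈ r, g < x) : rowInsert (r :: rest) x = (r ++ [x]) :: rest := by
  have : r.find? (fun y => decide (x < y)) = none := by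
    rw [List.find?_eq_none]; intro g hg; simpa using (h g hg).not_gt
  simp [rowInsert, this]

lemma tailCoupling (a c : ℕ) (q : List ℕ) (rest : List (List ℕ))
    (hq : ∀ g ∈ q, g ≤ c) (hca : c < a) :
    ∀ t : List ℕ, t.Pairwise (· < ·) → (∀ x ∈ t, c < x) → (∀ x ∈ t, x ≠ a) →
    ∀ τ : List ℕ, (∀ g ∈ τ, a < g) → (∀ g ∈ τ, ∀ x ∈ t, g < x) →
      List.foldl rowInsert ((q ++ τ) :: rowInsert rest a) t
        = List.foldl rowInsert ((q ++ [a] ++ τ) :: rest) t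
      ∨ ∃ τ' : List ℕ,
          List.foldl rowInsert ((q ++ τ) :: rowInsert rest a) t
            = (q ++ τ') :: rowInsert rest a ∧
          List.foldl rowInsert ((q ++ [a] ++ τ) :: rest) t
            = (q ++ [a] ++ τ') :: rest := by
  intro t
  induction t with
  | nil => intro _ _ _ τ _ _; exact Or.inr ⟨τ, rfl, rfl⟩
  | cons x t' ih =>
    intro ht htc hta τ hτa hτt
    have hcx : c < x := htc x (by simp)
    have hqx : ∀ g ∈ q, g < x := fun g hg => lt_of_le_of_lt (hq g hg) hcx
    rcases lt_or_gt_of_ne (hta x (by simp)) with hxa | hax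
    · -- x < a : states merge
      have hτnil : τ = [] := by
        cases τ with
        | nil => rfl
        | cons g τ =>
          exact absurd ((hτa g (by simp)).trans (hτt g (by simp) x (by simp)))
            (by omega)
      subst hτnil
      left
      have e1 : rowInsert ((q ++ []) :: rowInsert rest a) x
          = (q ++ [x]) :: rowInsert rest a := by
        rw [List.append_nil, rowInsert_none hqx]
      have e2 : rowInsert ((q ++ [a] ++ []) :: rest) x
          = (q ++ [x]) :: rowInsert rest a := by
        rw [List.append_nil]
        have hfq : q.find? (fun y => decide (x < y)) = none := by
          rw [List.find?_eq_none]; intro g hg; simpa using (hqx g hg).not_gt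
        have hf : (q ++ [a]).find? (fun y => decide (x < y)) = some a := by
          rw [List.find?_append, hfq]; simp [hxa]
        simp only [rowInsert, hf]
        congr 1
        rw [List.map_append]
        have : q.map (fun z => if z = a then x else z) = q := by
          have := List.map_congr_left (f := fun z => if z = a then x else z) (g := id)
            (l := q) (fun z hz => by
              have : z < a := lt_of_le_of_lt (hq z hz) hca
              simp [Nat.ne_of_lt this])
          simpa using this
        simp [this]
      simp only [List.foldl_cons, e1, e2]
    · -- a < x : both append
      have e1 : rowInsert ((q ++ τ) :: rowInsert rest a) x
          = (q ++ (τ ++ [x])) :: rowInsert rest a := by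
        rw [rowInsert_none, List.append_assoc]
        intro g hg
        rcases List.mem_append.1 hg with h | h
        · exact hqx g h
        · exact hτt g h x (by simp)
      have e2 : rowInsert ((q ++ [a] ++ τ) :: rest) x
          = (q ++ [a] ++ (τ ++ [x])) :: rest := by
        rw [rowInsert_none, List.append_assoc]
        intro g hg
        rcases List.mem_append.1 hg with h | h
        · rcases List.mem_append.1 h with h' | h'
          · exact (hq g h').trans_lt (hca.trans hax)
          · simp at h'; omega
        · exact hτt g h x (by simp)
      simp only [List.foldl_cons, e1, e2]
      apply ih (ht.sublist (by simp)) (fun y hy => htc y (by simp [hy]))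
        (fun y hy => hta y (by simp [hy]))
      · intro g hg
        rcases List.mem_append.1 hg with h | h
        · exact hτa g h
        · simp at h; omega
      · intro g hg y hy
        rcases List.mem_append.1 hg with h | h
        · exact hτt g h y (by simp [hy])
        · simp at h; subst h
          exact List.rel_of_pairwise_cons ht hy

lemma RSKList_append_singleton (l : List ℕ) (x : ℕ) :
    RSKList (l ++ [x]) = rowInsert (RSKList l) x := by
  simp [RSKList, List.foldl_append]

lemma rowInsert_entries (T : List (List ℕ)) (x : ℕ) :
    ∀ r ∈ rowInsert T x, ∀ g ∈ r, (∃ r' ∈ T, g ∈ r') ∨ g = x := by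
  induction T generalizing x with
  | nil => simp [rowInsert]
  | cons r rest ih =>
    intro s hs g hg
    simp only [rowInsert] at hs
    cases h : r.find? (fun y => decide (x < y)) with
    | none =>
      rw [h] at hs
      rcases List.mem_cons.1 hs with rfl | hs
      · rcases List.mem_append.1 hg with h1 | h1
        · exact Or.inl ⟨r, by simp, h1⟩
        · simp at h1; exact Or.inr h1
      · exact Or.inl ⟨s, by simp [hs], hg⟩
    | some y =>
      rw [h] at hs
      have hy : y ∈ r := List.mem_of_find?_eq_some h
      rcases List.mem_cons.1 hs with rfl | hs
      · rcases List.mem_map.1 hg with ⟨z, hz, hzg⟩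
        by_cases hzy : z = y
        · simp [hzy] at hzg; exact Or.inr hzg.symm
        · simp [hzy] at hzg; exact Or.inl ⟨r, by simp, hzg ▸ hz⟩
      · rcases ih y s hs g hg with ⟨r', hr', hgr'⟩ | rfl
        · exact Or.inl ⟨r', by simp [hr'], hgr'⟩
        · exact Or.inl ⟨r, by simp, hy⟩

lemma RSKList_entries (l : List ℕ) :
    ∀ r ∈ RSKList l, ∀ g ∈ r, g ∈ l := by
  induction l using List.reverseRecOn with
  | nil => simp [RSKList]
  | append_singleton l x ih =>
    rw [RSKList_append_singleton]
    intro r hr g hg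
    rcases rowInsert_entries _ _ r hr g hg with ⟨r', hr', hgr'⟩ | rfl
    · exact List.mem_append.2 (Or.inl (ih r' hr' g hgr'))
    · simp

lemma main_rsk (u t : List ℕ) (a c : ℕ) (hca : c < a) (hu : ∀ g ∈ u, g < a)
    (ht : t.Pairwise (· < ·)) (htc : ∀ x ∈ t, c < x) (hta : ∀ x ∈ t, x ≠ a) :
    Row2 (RSKList (u ++ a :: c :: t)) = Row2 (RSKList (u ++ c :: a :: t)) ∨
    (Row2 (RSKList (u ++ a :: c :: t)) = insert a (Row2 (RSKList (u ++ c :: a :: t))) ∧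
     ∀ g ∈ Row2 (RSKList (u ++ c :: a :: t)), g < a) := by
  have ew : RSKList (u ++ a :: c :: t)
      = List.foldl rowInsert (rowInsert (rowInsert (RSKList u) a) c) t := by
    simp [RSKList, List.foldl_append]
  have ev : RSKList (u ++ c :: a :: t)
      = List.foldl rowInsert (rowInsert (rowInsert (RSKList u) c) a) t := by
    simp [RSKList, List.foldl_append]
  cases hF : RSKList u with
  | nil =>
    -- state after a,c on w side: [[c],[a]]; on v side: [[c,a]]
    have sw : rowInsert (rowInsert ([] : List (List ℕ)) a) c
        = ([c] ++ ([] : List ℕ)) :: rowInsert [] a := by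
      have hf : [a].find? (fun y => decide (c < y)) = some a := by simp [hca]
      simp [rowInsert, hf]
    have sv : rowInsert (rowInsert ([] : List (List ℕ)) c) a
        = ([c] ++ [a] ++ ([] : List ℕ)) :: ([] : List (List ℕ)) := by
      have : rowInsert ([] : List (List ℕ)) c = [[c]] := by simp [rowInsert]
      rw [this, rowInsert_none (by simp [hca])]
      simp
    rw [ew, ev, hF, sw, sv]
    rcases tailCoupling a c [c] [] (by simp) hca t ht htc hta []
        (by simp) (by simp) with h | ⟨τ', h1, h2⟩
    · exact Or.inl (by rw [h])
    · right
      rw [h1, h2]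
      constructor
      · simp [Row2, rowInsert]
      · simp [Row2]
  | cons r rest =>
    have hr : ∀ g ∈ r, g < a := fun g hg =>
      hu g (RSKList_entries u r (hF ▸ List.mem_cons_self (a := r) (l := rest)) g hg)
    have sw1 : rowInsert (r :: rest) a = (r ++ [a]) :: rest := rowInsert_none hr
    cases hγ : r.find? (fun y => decide (c < y)) with
    | some γ =>
      -- the two tableaux agree entirely
      have hγr : γ ∈ r := List.mem_of_find?_eq_some hγ
      have hγa : γ < a := hr γ hγr
      have hfa : (r ++ [a]).find? (fun y => decide (c < y)) = some γ := by
        rw [List.find?_append, hγ]; rfl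
      set f : ℕ → ℕ := fun z => if z = γ then c else z with hfdef
      have sw2 : rowInsert ((r ++ [a]) :: rest) c = (r.map f ++ [a]) :: rowInsert rest γ := by
        simp only [rowInsert, hfa]
        congr 1
        rw [List.map_append]
        congr 1
        simp [hfdef, Nat.ne_of_gt hγa]
      have sv1 : rowInsert (r :: rest) c = (r.map f) :: rowInsert rest γ := by
        simp only [rowInsert, hγ]; rfl
      have sv2 : rowInsert ((r.map f) :: rowInsert rest γ) a
          = (r.map f ++ [a]) :: rowInsert rest γ := by
        apply rowInsert_none
        intro g hg
        rcases List.mem_map.1 hg with ⟨z, hz, hzg⟩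
        by_cases h : z = γ
        · simp [hfdef, h] at hzg; omega
        · simp [hfdef, h] at hzg; exact hzg ▸ hr z hz
      left
      rw [ew, ev, hF, sw1, sw2, sv1, sv2]
    | none =>
      have hrc : ∀ g ∈ r, g ≤ c := by
        intro g hg
        have := List.find?_eq_none.1 hγ g hg
        simpa using this
      have hfa : (r ++ [a]).find? (fun y => decide (c < y)) = some a := by
        rw [List.find?_append, hγ]; simp [hca]
      have sw2 : rowInsert ((r ++ [a]) :: rest) c
          = ((r ++ [c]) ++ ([] : List ℕ)) :: rowInsert rest a := by
        simp only [rowInsert, hfa]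
        congr 1
        rw [List.map_append]
        have h1 : r.map (fun z => if z = a then c else z) = r := by
          have := List.map_congr_left (f := fun z => if z = a then c else z) (g := id)
            (l := r) (fun z hz => by simp [Nat.ne_of_lt (hr z hz)])
          simpa using this
        simp [h1]
      have sv1 : rowInsert (r :: rest) c = (r ++ [c]) :: rest := by
        simp only [rowInsert, hγ]
      have sv2 : rowInsert ((r ++ [c]) :: rest) a
          = ((r ++ [c]) ++ [a] ++ ([] : List ℕ)) :: rest := by
        rw [rowInsert_none]
        · simp
        · intro g hg
          rcases List.mem_append.1 hg with h | h
          · exact hr g h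
          · simp at h; omega
      rw [ew, ev, hF, sw1, sw2, sv1, sv2]
      rcases tailCoupling a c (r ++ [c]) rest
          (by intro g hg; rcases List.mem_append.1 hg with h | h
              · exact hrc g h
              · simp at h; omega) hca t ht htc hta []
          (by simp) (by simp) with h | ⟨τ', h1, h2⟩
      · exact Or.inl (by rw [h])
      · right
        rw [h1, h2]
        have hrest : ∀ g ∈ (rest.getD 0 []), g < a := by
          intro g hg
          cases rest with
          | nil => simp at hg
          | cons ρ deep =>
            exact hu g (RSKList_entries u ρ (hF ▸ by simp) g (by simpa using hg))
        constructor
        · cases rest with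
          | nil => simp [Row2, rowInsert]
          | cons ρ deep =>
            have : rowInsert (ρ :: deep) a = (ρ ++ [a]) :: deep :=
              rowInsert_none (by intro g hg; exact hrest g (by simpa using hg))
            rw [this]
            ext x; simp [Row2, or_comm]
        · intro g hg
          apply hrest
          cases rest with
          | nil => simp [Row2] at hg
          | cons ρ deep => simpa [Row2] using hg

lemma RSKList_sorted (l : List ℕ) (hl : l.Pairwise (· < ·)) :
    RSKList l = if l = [] then [] else [l] := by
  induction l using List.reverseRecOn with
  | nil => simp [RSKList]
  | append_singleton l x ih =>
    rw [RSKList_append_singleton]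
    have hl' : l.Pairwise (· < ·) := hl.sublist (by simp)
    have hlt : ∀ g ∈ l, g < x := by
      intro g hg
      exact List.pairwise_append.1 hl |>.2.2 g hg x (by simp)
    rw [ih hl']
    rcases eq_or_ne l [] with rfl | hne
    · simp [rowInsert]
    · have : l.find? (fun y => decide (x < y)) = none := by
        rw [List.find?_eq_none]
        intro g hg
        simpa using (hlt g hg).not_gt
      simp [rowInsert, this, hne]

lemma crowded_mono {S L : Finset ℕ} (h : S ⊆ L) (hS : CrowdedSet S) : CrowdedSet L := by
  obtain ⟨x, y, hx, hcard⟩ := hS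
  refine ⟨x, y, hx, lt_of_lt_of_le hcard ?_⟩
  exact_mod_cast Finset.card_le_card (Finset.filter_subset_filter _ h)


/-- **Lemma.** If `w` is a minimal crowded permutation, then every crowded
subset of `Row₂(P(w))` contains the largest element of `Row₂(P(w))`. -/
theorem minimal_crowded_max_element {n : ℕ} (w : Equiv.Perm (Fin n))
    (hmin : MinimalCrowded w) :
    ∀ S : Finset ℕ, S ⊆ Row2 (RSKP w) → CrowdedSet S →
      ∀ zmax ∈ Row2 (RSKP w), (∀ y ∈ Row2 (RSKP w), y ≤ zmax) → zmax ∈ S := by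
  classical
  intro S hSsub hSc zmax hzmem hzub
  by_contra hzS
  obtain ⟨hfc, hcr, hminimal⟩ := hmin
  -- descents
  set D : Finset ℕ := (Finset.range n).filter
    (fun i => ∃ h : i + 1 < n, w ⟨i + 1, h⟩ < w ⟨i, by omega⟩) with hD
  have hDne : D.Nonempty := by
    by_contra hne
    rw [Finset.not_nonempty_iff_eq_empty] at hne
    -- then oneLine w is sorted, so Row2 is empty
    have hsort : (oneLine w).Pairwise (· < ·) := by
      rw [List.pairwise_iff_getElem]
      intro i j hi hj hij
      rw [oneLine_getElem w i hi, oneLine_getElem w j hj]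
      have hlen := oneLine_length w
      refine chain_lt w 0 ?_ i j (by omega) (by omega) (by omega) hij
      intro k hk _
      by_contra hnot
      have hkD : k ∈ D := by
        rw [hD, Finset.mem_filter, Finset.mem_range]
        refine ⟨by omega, hk, ?_⟩
        have hne' : w ⟨k, by omega⟩ ≠ w ⟨k + 1, hk⟩ := fun hh => by
          have := w.injective hh
          rw [Fin.ext_iff] at this
          simp at this
        exact lt_of_le_of_ne (not_lt.1 hnot) (fun hh => hne' hh.symm)
      rw [hne] at hkD
      simp at hkD
    have hif := RSKList_sorted (oneLine w) hsort
    have hR2 : Row2 (RSKP w) = ∅ := by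
      rw [RSKP, hif]
      split_ifs <;> simp [Row2]
    rw [hR2] at hzmem
    simp at hzmem
  -- main body
  set p := D.max' hDne with hpdef
  have hpn' : p ∈ D := D.max'_mem hDne
  rw [hD, Finset.mem_filter, Finset.mem_range] at hpn'
  obtain ⟨hpn, hp, hdesc⟩ := hpn'
  have hlast : ∀ k (hk : k + 1 < n), p + 1 ≤ k → w ⟨k, by omega⟩ < w ⟨k + 1, hk⟩ := by
    intro k hk hpk
    by_contra hnot
    have hkD : k ∈ D := by
      rw [hD, Finset.mem_filter, Finset.mem_range]
      refine ⟨by omega, hk, ?_⟩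
      have hne' : w ⟨k, by omega⟩ ≠ w ⟨k + 1, hk⟩ := fun hh => by
        have := w.injective hh
        rw [Fin.ext_iff] at this
        simp at this
      exact lt_of_le_of_ne (not_lt.1 hnot) (fun hh => hne' hh.symm)
    have := D.le_max' k hkD
    omega
  have hw : oneLine w = (oneLine w).take p ++ (w ⟨p, hpn⟩ : ℕ) ::
      (w ⟨p + 1, hp⟩ : ℕ) :: (oneLine w).drop (p + 2) := oneLine_decomp w p hp
  have hv : oneLine (w * simpleTr p hp) = (oneLine w).take p ++ (w ⟨p + 1, hp⟩ : ℕ) ::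
      (w ⟨p, hpn⟩ : ℕ) :: (oneLine w).drop (p + 2) := by
    have h0 : oneLine (w * simpleTr p hp) = (oneLine (w * simpleTr p hp)).take p ++
        ((w * simpleTr p hp) ⟨p, hpn⟩ : ℕ) :: ((w * simpleTr p hp) ⟨p + 1, hp⟩ : ℕ) ::
        (oneLine (w * simpleTr p hp)).drop (p + 2) := oneLine_decomp (w * simpleTr p hp) p hp
    rw [take_swap_eq w p hp, drop_swap_eq w p hp] at h0
    rw [h0, swap_apply_p w p hp, swap_apply_p1 w p hp]
  have hca : (w ⟨p + 1, hp⟩ : ℕ) < (w ⟨p, hpn⟩ : ℕ) := hdesc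
  have hu : ∀ g ∈ (oneLine w).take p, g < (w ⟨p, hpn⟩ : ℕ) := by
    intro g hg
    rw [List.mem_iff_getElem] at hg
    obtain ⟨i, hi, hgi⟩ := hg
    have hip : i < p := by
      simp [oneLine_length] at hi
      omega
    have hin : i < n := by omega
    have hgw : g = (w ⟨i, hin⟩ : ℕ) := by
      rw [← hgi, List.getElem_take, oneLine_getElem w i (by rw [oneLine_length]; omega)]
    by_contra hga
    have hne' : (w ⟨p, hpn⟩ : ℕ) ≠ g := fun hh => by
      rw [hgw] at hh
      have := w.injective (Fin.ext hh)
      rw [Fin.ext_iff] at this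
      simp at this
      omega
    have hlt : w ⟨p, hpn⟩ < w ⟨i, hin⟩ := by
      have : (w ⟨p, hpn⟩ : ℕ) < g := lt_of_le_of_ne (not_lt.1 hga) hne'
      rw [hgw] at this
      exact this
    exact hfc ⟨⟨i, hin⟩, ⟨p, hpn⟩, ⟨p + 1, hp⟩, hip, by simp [Fin.lt_iff_val_lt_val],
      hdesc, hlt⟩
  have hT : ∀ (x : ℕ), x ∈ (oneLine w).drop (p + 2) →
      ∃ (i : ℕ) (hi : p + 2 + i < n), x = (w ⟨p + 2 + i, hi⟩ : ℕ) := by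
    intro x hx
    rw [List.mem_iff_getElem] at hx
    obtain ⟨i, hi, hxi⟩ := hx
    have hin : p + 2 + i < n := by
      simp [oneLine_length] at hi
      omega
    refine ⟨i, hin, ?_⟩
    rw [← hxi, List.getElem_drop, oneLine_getElem w _ (by rw [oneLine_length]; omega)]
  have ht : ((oneLine w).drop (p + 2)).Pairwise (· < ·) := by
    rw [List.pairwise_iff_getElem]
    intro i j hi hj hij
    have hilen : p + 2 + i < n := by simp [oneLine_length] at hi; omega
    have hjlen : p + 2 + j < n := by simp [oneLine_length] at hj; omega
    rw [List.getElem_drop, List.getElem_drop,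
      oneLine_getElem w _ (by rw [oneLine_length]; omega),
      oneLine_getElem w _ (by rw [oneLine_length]; omega)]
    exact chain_lt w (p + 1) hlast (p + 2 + i) (p + 2 + j) hilen hjlen (by omega) (by omega)
  have htc : ∀ x ∈ (oneLine w).drop (p + 2), (w ⟨p + 1, hp⟩ : ℕ) < x := by
    intro x hx
    obtain ⟨i, hin, rfl⟩ := hT x hx
    exact chain_lt w (p + 1) hlast (p + 1) (p + 2 + i) (by omega) hin (by omega) (by omega)
  have hta : ∀ x ∈ (oneLine w).drop (p + 2), x ≠ (w ⟨p, hpn⟩ : ℕ) := by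
    intro x hx
    obtain ⟨i, hin, rfl⟩ := hT x hx
    intro hh
    have := w.injective (Fin.ext hh)
    rw [Fin.ext_iff] at this
    simp at this
    omega
  have main := main_rsk ((oneLine w).take p) ((oneLine w).drop (p + 2))
    (w ⟨p, hpn⟩ : ℕ) (w ⟨p + 1, hp⟩ : ℕ) hca hu ht htc hta
  have hRw : RSKP w = RSKList ((oneLine w).take p ++ (w ⟨p, hpn⟩ : ℕ) ::
      (w ⟨p + 1, hp⟩ : ℕ) :: (oneLine w).drop (p + 2)) := by rw [RSKP, ← hw]
  have hRv : RSKP (w * simpleTr p hp) = RSKList ((oneLine w).take p ++ (w ⟨p + 1, hp⟩ : ℕ) ::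
      (w ⟨p, hpn⟩ : ℕ) :: (oneLine w).drop (p + 2)) := by rw [RSKP, ← hv]
  have hSv : S ⊆ Row2 (RSKP (w * simpleTr p hp)) := by
    rcases main with heq | ⟨hins, hlt⟩
    · intro s hs
      have := hSsub hs
      rw [hRw, heq] at this
      rw [hRv]
      exact this
    · have ha : (w ⟨p, hpn⟩ : ℕ) ∈ Row2 (RSKP w) := by
        rw [hRw, hins]
        exact Finset.mem_insert_self _ _
      have hzm : zmax = (w ⟨p, hpn⟩ : ℕ) := by
        have hmem := hzmem
        rw [hRw, hins] at hmem
        rcases Finset.mem_insert.1 hmem with h | h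
        · exact h
        · have h2 := hlt zmax h
          have h3 := hzub _ ha
          omega
      intro s hs
      have hsw := hSsub hs
      rw [hRw, hins] at hsw
      rcases Finset.mem_insert.1 hsw with h | h
      · exfalso
        apply hzS
        rwa [hzm, ← h]
      · rw [hRv]
        exact h
  have hfcv : FullyCommutative (w * simpleTr p hp) := fc_swap hp hdesc hfc
  have hvw : (w * simpleTr p hp) * simpleTr p hp = w := by
    rw [mul_assoc, simpleTr, Equiv.swap_mul_self, mul_one]
  have hcov : RWCovers (w * simpleTr p hp) w := by
    refine ⟨p, hp, hvw.symm, ?_⟩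
    have hasc : (w * simpleTr p hp) ⟨p, hpn⟩ < (w * simpleTr p hp) ⟨p + 1, hp⟩ := by
      rw [show (w * simpleTr p hp) ⟨p, hpn⟩ = w ⟨p + 1, hp⟩ from swap_apply_p w p hp,
        show (w * simpleTr p hp) ⟨p + 1, hp⟩ = w ⟨p, hpn⟩ from swap_apply_p1 w p hp]
      exact hdesc
    have := invCount_swap hp hasc
    rwa [hvw] at this
  have hvne : w * simpleTr p hp ≠ w := by
    intro h
    have h1 : (w * simpleTr p hp) ⟨p, hpn⟩ = w ⟨p, hpn⟩ := by rw [h]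
    rw [swap_apply_p w p hp] at h1
    have := w.injective h1
    rw [Fin.ext_iff] at this
    simp at this
  exact hminimal (w * simpleTr p hp) hfcv (Relation.ReflTransGen.single hcov) hvne
    (crowded_mono hSv hSc)
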